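/- If f : ℕ → ℚ(q) and g : ℕ → ℚ(q) are both q-holonomic sequences, then their pointwise product f · g is a q-holonomic sequence. -/

import Mathlib

noncomputable section

namespace StmtQH

/-- A sequence `f : ℕ → ℚ(q)` is q-holonomic if there are `d ∈ ℕ` and polynomials
`a₀, …, a_d ∈ ℚ(q)[x]`, not all zero, with `Σ_{i=0}^{d} a_i(qⁿ) f(n+i) = 0` for all `n`. -/
def IsQHolonomic (f : ℕ → RatFunc ℚ) : Prop :=
  ∃ (d : ℕ) (a : Fin (d + 1) → Polynomial (RatFunc ℚ)),
    (∃ i, a i ≠ 0) ∧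
    ∀ n : ℕ, ∑ i : Fin (d + 1), (a i).eval ((RatFunc.X : RatFunc ℚ) ^ n) * f (n + i) = 0

end StmtQH

namespace StmtQH

set_option maxHeartbeats 1000000
set_option synthInstance.maxHeartbeats 400000

open Polynomial Finset

abbrev K : Type := RatFunc ℚ

abbrev XX : K := RatFunc.X

lemma XX_pow_ne_zero (s : ℕ) : (XX ^ s : K) ≠ 0 := pow_ne_zero _ RatFunc.X_ne_zero

/-- The twisted substitution `x ↦ X^s · x` on polynomials over `K`. -/
def sh (s : ℕ) (p : Polynomial K) : Polynomial K :=
  p.comp (Polynomial.C (XX ^ s) * Polynomial.X)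

lemma sh_eval (s n : ℕ) (p : Polynomial K) :
    (sh s p).eval (XX ^ n) = p.eval (XX ^ (n + s)) := by
  simp [sh, Polynomial.eval_comp, pow_add, mul_comm]

lemma sh_ne_zero {p : Polynomial K} (hp : p ≠ 0) (s : ℕ) : sh s p ≠ 0 := by
  intro h
  rcases Polynomial.comp_eq_zero_iff.mp h with h' | ⟨_, h2⟩
  · exact hp h'
  · have := congrArg Polynomial.natDegree h2
    rw [Polynomial.natDegree_C_mul (XX_pow_ne_zero s), Polynomial.natDegree_X,
      Polynomial.natDegree_C] at this
    exact one_ne_zero this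

/-- From `IsQHolonomic` extract a recurrence with nonzero top coefficient,
stated with `ℕ`-indexed coefficients and `Finset.range` sums. -/
lemma extract {f : ℕ → K} (hf : IsQHolonomic f) :
    ∃ (d : ℕ) (A : ℕ → Polynomial K), A d ≠ 0 ∧
      ∀ n, ∑ i ∈ Finset.range (d + 1), (A i).eval (XX ^ n) * f (n + i) = 0 := by
  classical
  obtain ⟨d, a, ⟨i0, hi0⟩, hrec⟩ := hf
  set S : Finset (Fin (d + 1)) := Finset.univ.filter (fun i => a i ≠ 0) with hSdef
  have hS : S.Nonempty := ⟨i0, by simp [hSdef, hi0]⟩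
  set m : Fin (d + 1) := S.max' hS with hm
  have hmS : m ∈ S := S.max'_mem hS
  have hma : a m ≠ 0 := (Finset.mem_filter.mp hmS).2
  set A : ℕ → Polynomial K := fun i => if h : i < d + 1 then a ⟨i, h⟩ else 0 with hAdef
  refine ⟨(m : ℕ), A, ?_, ?_⟩
  · have hmlt : (m : ℕ) < d + 1 := m.isLt
    simpa [hAdef, hmlt, Nat.le_of_lt_succ hmlt] using hma
  · intro n
    have h1 : ∑ i ∈ Finset.range (d + 1), (A i).eval (XX ^ n) * f (n + i) = 0 := by
      have h2 := hrec n
      rw [← Fin.sum_univ_eq_sum_range (fun i => (A i).eval (XX ^ n) * f (n + i)) (d + 1)]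
      rw [← h2]
      apply Finset.sum_congr rfl
      intro i _
      have : A (i : ℕ) = a i := by simp [hAdef, i.isLt, not_lt.mpr (Nat.le_of_lt_succ i.isLt)]
      rw [this]
    rw [← h1]
    apply Finset.sum_subset
    · intro x hx
      rw [Finset.mem_range] at hx ⊢
      omega
    · intro x hx hx'
      rw [Finset.mem_range] at hx hx'
      have hxd : x < d + 1 := hx
      have hax : a ⟨x, hxd⟩ = 0 := by
        by_contra hax
        have hxS : (⟨x, hxd⟩ : Fin (d + 1)) ∈ S := by simp [hSdef, hax]
        have := S.le_max' _ hxS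
        have : (⟨x, hxd⟩ : Fin (d + 1)) ≤ m := this
        have hxm : x ≤ (m : ℕ) := this
        omega
      have : A x = 0 := by simp [hAdef, hxd, hax]
      rw [this]
      simp

/-- Every shift `f (n + j)` is a polynomial-coefficient combination of
`f n, …, f (n + d - 1)` after clearing by a fixed nonzero polynomial. -/
lemma red (f : ℕ → K) (d : ℕ) (A : ℕ → Polynomial K) (hAd : A d ≠ 0)
    (hA : ∀ n, ∑ i ∈ Finset.range (d + 1), (A i).eval (XX ^ n) * f (n + i) = 0) :
    ∀ k, ∃ (b : Polynomial K) (p : ℕ → ℕ → Polynomial K), b ≠ 0 ∧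
      ∀ j ≤ k, ∀ n, b.eval (XX ^ n) * f (n + j)
        = ∑ i ∈ Finset.range d, (p j i).eval (XX ^ n) * f (n + i) := by
  classical
  have step : ∀ (k : ℕ) (b : Polynomial K) (p : ℕ → ℕ → Polynomial K), b ≠ 0 →
      (∀ j ≤ k, ∀ n, b.eval (XX ^ n) * f (n + j)
        = ∑ i ∈ Finset.range d, (p j i).eval (XX ^ n) * f (n + i)) →
      d ≤ k + 1 →
      ∀ n, (sh (k + 1 - d) (A d) * b).eval (XX ^ n) * f (n + (k + 1))
        = ∑ t ∈ Finset.range d,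
            ((-∑ i ∈ Finset.range d, sh (k + 1 - d) (A i) * p (k + 1 - d + i) t)).eval (XX ^ n)
              * f (n + t) := by
    intro k b p hb hp hd n
    set s := k + 1 - d with hs
    have hsd : s + d = k + 1 := by omega
    have hrec := hA (n + s)
    rw [Finset.sum_range_succ] at hrec
    have hAd' : (A d).eval (XX ^ (n + s)) * f (n + s + d)
        = -∑ i ∈ Finset.range d, (A i).eval (XX ^ (n + s)) * f (n + s + i) := by
      rw [add_comm] at hrec
      exact eq_neg_of_add_eq_zero_left hrec
    calc (sh s (A d) * b).eval (XX ^ n) * f (n + (k + 1))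
        = b.eval (XX ^ n) * ((A d).eval (XX ^ (n + s)) * f (n + s + d)) := by
          rw [Polynomial.eval_mul, sh_eval]
          have : n + s + d = n + (k + 1) := by omega
          rw [this]; ring
      _ = b.eval (XX ^ n) * (-∑ i ∈ Finset.range d, (A i).eval (XX ^ (n + s)) * f (n + s + i)) := by
          rw [hAd']
      _ = -∑ i ∈ Finset.range d, (A i).eval (XX ^ (n + s)) * (b.eval (XX ^ n) * f (n + (s + i))) := by
          rw [mul_neg, Finset.mul_sum, neg_inj]
          apply Finset.sum_congr rfl
          intro i _
          have h3 : n + s + i = n + (s + i) := by omega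
          rw [h3]; ring
      _ = -∑ i ∈ Finset.range d, (A i).eval (XX ^ (n + s)) *
            (∑ t ∈ Finset.range d, (p (s + i) t).eval (XX ^ n) * f (n + t)) := by
          congr 1
          apply Finset.sum_congr rfl
          intro i hi
          rw [Finset.mem_range] at hi
          rw [hp (s + i) (by omega) n]
      _ = ∑ i ∈ Finset.range d, ∑ t ∈ Finset.range d,
            -((A i).eval (XX ^ (n + s)) * ((p (s + i) t).eval (XX ^ n) * f (n + t))) := by
          rw [← Finset.sum_neg_distrib]
          apply Finset.sum_congr rfl
          intro i _
          rw [Finset.mul_sum, ← Finset.sum_neg_distrib]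
      _ = ∑ t ∈ Finset.range d, ∑ i ∈ Finset.range d,
            -((A i).eval (XX ^ (n + s)) * ((p (s + i) t).eval (XX ^ n) * f (n + t))) :=
          Finset.sum_comm
      _ = ∑ t ∈ Finset.range d,
            ((-∑ i ∈ Finset.range d, sh s (A i) * p (s + i) t)).eval (XX ^ n) * f (n + t) := by
          apply Finset.sum_congr rfl
          intro t _
          rw [Polynomial.eval_neg, Polynomial.eval_finset_sum, neg_mul, Finset.sum_mul,
            ← Finset.sum_neg_distrib]
          apply Finset.sum_congr rfl
          intro i _
          rw [Polynomial.eval_mul, sh_eval]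
          ring
  intro k
  induction k with
  | zero =>
    rcases Nat.eq_zero_or_pos d with hd | hd
    · subst hd
      refine ⟨A 0, fun _ _ => 0, hAd, ?_⟩
      intro j hj n
      interval_cases j
      have := hA n
      simp only [Finset.sum_range_succ, Finset.sum_range_zero] at this
      simpa using this
    · refine ⟨1, fun j i => if i = j then 1 else 0, one_ne_zero, ?_⟩
      intro j hj n
      interval_cases j
      rw [Finset.sum_eq_single_of_mem 0 (Finset.mem_range.mpr hd)
        (fun i _ hne => by simp [hne])]
      simp
  | succ k ih =>
    obtain ⟨b, p, hb, hp⟩ := ih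
    by_cases hdk : k + 1 < d
    · refine ⟨b, fun j i => if j = k + 1 then (if i = k + 1 then b else 0) else p j i, hb, ?_⟩
      intro j hj n
      by_cases hjk : j = k + 1
      · subst hjk
        simp only [if_pos rfl]
        rw [Finset.sum_eq_single_of_mem (k + 1) (Finset.mem_range.mpr hdk)
          (fun i _ hne => by simp [hne])]
        simp
      · simp only [if_neg hjk]
        exact hp j (by omega) n
    · have hd : d ≤ k + 1 := by omega
      refine ⟨sh (k + 1 - d) (A d) * b,
        fun j t => if j = k + 1
          then -∑ i ∈ Finset.range d, sh (k + 1 - d) (A i) * p (k + 1 - d + i) t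
          else sh (k + 1 - d) (A d) * p j t,
        mul_ne_zero (sh_ne_zero hAd _) hb, ?_⟩
      intro j hj n
      by_cases hjk : j = k + 1
      · subst hjk
        simp only [if_pos rfl]
        exact step k b p hb hp hd n
      · simp only [if_neg hjk]
        have hjle : j ≤ k := by omega
        calc (sh (k + 1 - d) (A d) * b).eval (XX ^ n) * f (n + j)
            = (sh (k + 1 - d) (A d)).eval (XX ^ n) * (b.eval (XX ^ n) * f (n + j)) := by
              rw [Polynomial.eval_mul]; ring
          _ = (sh (k + 1 - d) (A d)).eval (XX ^ n)
                * ∑ i ∈ Finset.range d, (p j i).eval (XX ^ n) * f (n + i) := by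
              rw [hp j hjle n]
          _ = ∑ i ∈ Finset.range d,
                (sh (k + 1 - d) (A d) * p j i).eval (XX ^ n) * f (n + i) := by
              rw [Finset.mul_sum]
              apply Finset.sum_congr rfl
              intro i _
              rw [Polynomial.eval_mul]; ring

/-- Any `m+1` vectors of polynomials in a space of coordinates of size `≤ m` admit a
nontrivial polynomial linear relation. -/
lemma dep {m : ℕ} {ι : Type} [Fintype ι] (hcard : Fintype.card ι ≤ m)
    (w : Fin (m + 1) → ι → Polynomial K) :
    ∃ lam : Fin (m + 1) → Polynomial K, (∃ j, lam j ≠ 0) ∧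
      ∀ i, ∑ j : Fin (m + 1), lam j * w j i = 0 := by
  classical
  let v : Fin (m + 1) → ι → RatFunc K := fun j i => algebraMap (Polynomial K) (RatFunc K) (w j i)
  have hni : ¬ LinearIndependent (RatFunc K) v := by
    intro h
    have hle := h.fintype_card_le_finrank
    rw [Fintype.card_fin, Module.finrank_pi] at hle
    omega
  obtain ⟨c, hcsum, j0, hj0⟩ := Fintype.not_linearIndependent_iff.mp hni
  set lam : Fin (m + 1) → Polynomial K :=
    fun j => (c j).num * ∏ k ∈ Finset.univ.erase j, (c k).denom with hlam
  have hmap : ∀ j, algebraMap (Polynomial K) (RatFunc K) (lam j)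
      = c j * algebraMap (Polynomial K) (RatFunc K) (∏ k : Fin (m + 1), (c k).denom) := by
    intro j
    have h1 : c j * algebraMap (Polynomial K) (RatFunc K) ((c j).denom)
        = algebraMap (Polynomial K) (RatFunc K) ((c j).num) := by
      conv_lhs => lhs; rw [← RatFunc.num_div_denom (c j)]
      exact div_mul_cancel₀ _ (RatFunc.algebraMap_ne_zero ((c j).denom_ne_zero))
    have h2 : (∏ k : Fin (m + 1), (c k).denom)
        = (c j).denom * ∏ k ∈ Finset.univ.erase j, (c k).denom :=
      (Finset.mul_prod_erase Finset.univ _ (Finset.mem_univ j)).symm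
    rw [hlam]
    simp only []
    rw [h2, map_mul, map_mul, ← h1]
    ring
  refine ⟨lam, ⟨j0, ?_⟩, ?_⟩
  · apply mul_ne_zero (RatFunc.num_ne_zero hj0)
    rw [Finset.prod_ne_zero_iff]
    intro k _
    exact (c k).denom_ne_zero
  · intro i
    apply RatFunc.algebraMap_injective (K := K)
    rw [map_sum, map_zero]
    have hcoord : ∑ j : Fin (m + 1), c j * v j i = 0 := by
      have h3 := congrFun hcsum i
      rw [Finset.sum_apply] at h3
      simpa only [Pi.smul_apply, smul_eq_mul, Pi.zero_apply] using h3
    calc ∑ j : Fin (m + 1), algebraMap (Polynomial K) (RatFunc K) (lam j * w j i)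
        = ∑ j : Fin (m + 1),
            (c j * algebraMap (Polynomial K) (RatFunc K) (∏ k : Fin (m + 1), (c k).denom))
              * v j i := by
          apply Finset.sum_congr rfl
          intro j _
          rw [map_mul, hmap j]
      _ = algebraMap (Polynomial K) (RatFunc K) (∏ k : Fin (m + 1), (c k).denom)
            * ∑ j : Fin (m + 1), c j * v j i := by
          rw [Finset.mul_sum]
          apply Finset.sum_congr rfl
          intro j _
          ring
      _ = 0 := by rw [hcoord, mul_zero]

theorem isQHolonomic_mul (f g : ℕ → RatFunc ℚ)
    (hf : IsQHolonomic f) (hg : IsQHolonomic g) :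
    IsQHolonomic (fun n => f n * g n) := by
  classical
  obtain ⟨d, Af, hAfd, hfrec⟩ := extract hf
  obtain ⟨e, Ag, hAge, hgrec⟩ := extract hg
  obtain ⟨b, p, hb, hp⟩ := red f d Af hAfd hfrec (d * e)
  obtain ⟨c, q, hc, hq⟩ := red g e Ag hAge hgrec (d * e)
  obtain ⟨lam, ⟨j0, hj0⟩, hdep⟩ := dep (m := d * e) (ι := Fin d × Fin e)
    (by simp [Fintype.card_prod]) (fun j i => p (j : ℕ) (i.1 : ℕ) * q (j : ℕ) (i.2 : ℕ))
  refine ⟨d * e, fun j => lam j * (b * c),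
    ⟨j0, mul_ne_zero hj0 (mul_ne_zero hb hc)⟩, ?_⟩
  intro n
  have key : ∀ j : Fin (d * e + 1),
      (b * c).eval (XX ^ n) * (f (n + (j : ℕ)) * g (n + (j : ℕ)))
        = ∑ i : Fin d × Fin e,
            (p (j : ℕ) (i.1 : ℕ) * q (j : ℕ) (i.2 : ℕ)).eval (XX ^ n)
              * (f (n + (i.1 : ℕ)) * g (n + (i.2 : ℕ))) := by
    intro j
    have h1 := hp (j : ℕ) (Nat.le_of_lt_succ j.isLt) n
    have h2 := hq (j : ℕ) (Nat.le_of_lt_succ j.isLt) n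
    calc (b * c).eval (XX ^ n) * (f (n + (j : ℕ)) * g (n + (j : ℕ)))
        = (b.eval (XX ^ n) * f (n + (j : ℕ))) * (c.eval (XX ^ n) * g (n + (j : ℕ))) := by
          rw [Polynomial.eval_mul]; ring
      _ = (∑ i ∈ Finset.range d, (p (j : ℕ) i).eval (XX ^ n) * f (n + i))
            * (∑ i ∈ Finset.range e, (q (j : ℕ) i).eval (XX ^ n) * g (n + i)) := by
          rw [h1, h2]
      _ = ∑ i1 ∈ Finset.range d, ∑ i2 ∈ Finset.range e,
            ((p (j : ℕ) i1).eval (XX ^ n) * f (n + i1))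
              * ((q (j : ℕ) i2).eval (XX ^ n) * g (n + i2)) := by
          rw [Finset.sum_mul_sum]
      _ = ∑ i : Fin d × Fin e,
            (p (j : ℕ) (i.1 : ℕ) * q (j : ℕ) (i.2 : ℕ)).eval (XX ^ n)
              * (f (n + (i.1 : ℕ)) * g (n + (i.2 : ℕ))) := by
          rw [Fintype.sum_prod_type]
          rw [← Fin.sum_univ_eq_sum_range (fun i1 => ∑ i2 ∈ Finset.range e,
            ((p (j : ℕ) i1).eval (XX ^ n) * f (n + i1))
              * ((q (j : ℕ) i2).eval (XX ^ n) * g (n + i2))) d]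
          apply Finset.sum_congr rfl
          intro i1 _
          rw [← Fin.sum_univ_eq_sum_range (fun i2 =>
            ((p (j : ℕ) (i1 : ℕ)).eval (XX ^ n) * f (n + (i1 : ℕ)))
              * ((q (j : ℕ) i2).eval (XX ^ n) * g (n + i2))) e]
          apply Finset.sum_congr rfl
          intro i2 _
          simp only [Polynomial.eval_mul]
          ring
  calc ∑ i : Fin (d * e + 1), (lam i * (b * c)).eval (XX ^ n)
          * ((fun n => f n * g n) (n + (i : ℕ)))
      = ∑ j : Fin (d * e + 1), (lam j).eval (XX ^ n)
          * ((b * c).eval (XX ^ n) * (f (n + (j : ℕ)) * g (n + (j : ℕ)))) := by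
        apply Finset.sum_congr rfl
        intro j _
        simp only [Polynomial.eval_mul]
        ring
    _ = ∑ j : Fin (d * e + 1), (lam j).eval (XX ^ n)
          * ∑ i : Fin d × Fin e,
              (p (j : ℕ) (i.1 : ℕ) * q (j : ℕ) (i.2 : ℕ)).eval (XX ^ n)
                * (f (n + (i.1 : ℕ)) * g (n + (i.2 : ℕ))) := by
        apply Finset.sum_congr rfl
        intro j _
        rw [key j]
    _ = ∑ i : Fin d × Fin e,
          (∑ j : Fin (d * e + 1), lam j * (p (j : ℕ) (i.1 : ℕ) * q (j : ℕ) (i.2 : ℕ))).eval (XX ^ n)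
            * (f (n + (i.1 : ℕ)) * g (n + (i.2 : ℕ))) := by
        rw [show (∑ j : Fin (d * e + 1), (lam j).eval (XX ^ n)
            * ∑ i : Fin d × Fin e,
                (p (j : ℕ) (i.1 : ℕ) * q (j : ℕ) (i.2 : ℕ)).eval (XX ^ n)
                  * (f (n + (i.1 : ℕ)) * g (n + (i.2 : ℕ))))
          = ∑ j : Fin (d * e + 1), ∑ i : Fin d × Fin e, (lam j).eval (XX ^ n)
            * ((p (j : ℕ) (i.1 : ℕ) * q (j : ℕ) (i.2 : ℕ)).eval (XX ^ n)
                  * (f (n + (i.1 : ℕ)) * g (n + (i.2 : ℕ))))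
          from Finset.sum_congr rfl (fun j _ => Finset.mul_sum _ _ _)]
        rw [Finset.sum_comm]
        apply Finset.sum_congr rfl
        intro i _
        rw [Polynomial.eval_finset_sum, Finset.sum_mul]
        apply Finset.sum_congr rfl
        intro j _
        simp only [Polynomial.eval_mul]
        ring
    _ = 0 := by
        apply Finset.sum_eq_zero
        intro i _
        rw [hdep i]
        simp

end StmtQH
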